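/- arXiv:1001.4420 — 2 statements merged into one kernel-verified Lean document; each statement's English description precedes it below -/
import Mathlib

section
/- Any n×n board coloured with c ≥ 2 colours can be flooded in at most c(n-1) Flood-It moves. In particular, max over boards B of m(B) is at most c(n-1). -/
/-- Tiles of an `n × n` board. -/
abbrev Tile (n : ℕ) := Fin n × Fin n

/-- Two tiles are adjacent if they differ by a unit step (horizontally or vertically). -/
def adjT {n : ℕ} (p q : Tile n) : Prop :=
  ((p.1 : ℤ) - (q.1 : ℤ)).natAbs + ((p.2 : ℤ) - (q.2 : ℤ)).natAbs = 1

/-- A board assigns one of `c` colours to each tile. -/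
abbrev Board (n c : ℕ) := Tile n → Fin c

/-- `SameColorConn B p q` : `q` is in the monochromatic connected region of `B`
containing `p`. -/
def SameColorConn {n c : ℕ} (B : Board n c) (p q : Tile n) : Prop :=
  Relation.ReflTransGen (fun a b => adjT a b ∧ B a = B b) p q

open Classical in
/-- A Flood-It move: recolour the monochromatic region containing `o` with colour `k`. -/
noncomputable def flood {n c : ℕ} (B : Board n c) (o : Tile n) (k : Fin c) : Board n c :=
  fun p => if SameColorConn B o p then k else B p

/-- Play a sequence of Flood-It moves (flooding from `o`). -/
noncomputable def playMoves {n c : ℕ} (o : Tile n) : Board n c → List (Fin c) → Board n c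
  | B, [] => B
  | B, k :: ks => playMoves o (flood B o k) ks

/-- A board is flooded when it is monochromatic. -/
def Flooded {n c : ℕ} (B : Board n c) : Prop := ∀ p q : Tile n, B p = B q

/-- `floodMoves B o` : the minimum number of moves (flooding from `o`) needed to
flood the board `B`. -/
noncomputable def floodMoves {n c : ℕ} (B : Board n c) (o : Tile n) : ℕ :=
  sInf {l : ℕ | ∃ ms : List (Fin c), ms.length = l ∧ Flooded (playMoves o B ms)}

section Aux

variable {n c : ℕ} (o : Tile n)

lemma connColor {B : Board n c} {p : Tile n} (h : SameColorConn B o p) : B p = B o := by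
  induction h with
  | refl => rfl
  | tail h₁ h₂ ih => rw [← ih, ← h₂.2]

lemma conn_flood {B : Board n c} {k : Fin c} {p : Tile n}
    (h : SameColorConn B o p) : SameColorConn (flood B o k) o p := by
  induction h with
  | refl => exact .refl
  | @tail b p h₁ h₂ ih =>
      refine ih.tail ⟨h₂.1, ?_⟩
      have hb : SameColorConn B o b := h₁
      have hp : SameColorConn B o p := h₁.tail h₂
      simp [flood, hb, hp]

lemma conn_flood_absorb {B : Board n c} {k : Fin c} {p q : Tile n}
    (hp : SameColorConn B o p) (hadj : adjT p q) (hq : B q = k ∨ SameColorConn B o q) :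
    SameColorConn (flood B o k) o q := by
  rcases hq with hq | hq
  · refine (conn_flood o hp).tail ⟨hadj, ?_⟩
    by_cases h : SameColorConn B o q
    · simp [flood, hp, h]
    · simp [flood, hp, h, hq]
  · exact conn_flood o hq

/-- Every tile is either in the flooded region or keeps its original colour. -/
def GoodB (B C : Board n c) : Prop := ∀ q, SameColorConn C o q ∨ C q = B q

lemma good_flood {B C : Board n c} (hg : GoodB o B C) (k : Fin c) :
    GoodB o B (flood C o k) := by
  intro q
  by_cases h : SameColorConn C o q
  · exact Or.inl (conn_flood o h)
  · right
    rw [show flood C o k q = C q by simp [flood, h]]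
    exact (hg q).resolve_left h

lemma playMoves_append (B : Board n c) (l₁ l₂ : List (Fin c)) :
    playMoves o B (l₁ ++ l₂) = playMoves o (playMoves o B l₁) l₂ := by
  induction l₁ generalizing B with
  | nil => rfl
  | cons k l ih => simp only [List.cons_append, playMoves]; exact ih _

lemma conn_play {C : Board n c} {p : Tile n} (L : List (Fin c)) (h : SameColorConn C o p) :
    SameColorConn (playMoves o C L) o p := by
  induction L generalizing C with
  | nil => exact h
  | cons k L ih => exact ih (conn_flood o h)

lemma good_play {B C : Board n c} (L : List (Fin c)) (hg : GoodB o B C) :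
    GoodB o B (playMoves o C L) := by
  induction L generalizing C with
  | nil => exact hg
  | cons k L ih => exact ih (good_flood o hg k)

lemma absorbList {B : Board n c} (L : List (Fin c)) :
    ∀ (C : Board n c), GoodB o B C → ∀ p q : Tile n, adjT p q → SameColorConn C o p →
      (B q ∈ L ∨ SameColorConn C o q) → SameColorConn (playMoves o C L) o q := by
  induction L with
  | nil =>
      intro C _ p q _ _ h
      exact h.resolve_left (by simp)
  | cons k L ih =>
      intro C hg p q hadj hp hmem
      have hg' := good_flood o hg k
      have hp' := conn_flood (k := k) o hp
      simp only [playMoves]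
      rcases hmem with hmem | hq
      · rcases List.mem_cons.mp hmem with hk | hmem
        · rcases hg q with hq | hq
          · exact ih _ hg' p q hadj hp' (Or.inr (conn_flood o hq))
          · exact ih _ hg' p q hadj hp'
              (Or.inr (conn_flood_absorb o hp hadj (Or.inl (hq.trans hk))))
        · exact ih _ hg' p q hadj hp' (Or.inl hmem)
      · exact ih _ hg' p q hadj hp' (Or.inr (conn_flood o hq))

end Aux

section Strategy

variable {n c : ℕ}

/-- Flood the first row, one tile per move. -/
lemma row0 (hn : 1 ≤ n) (B : Board n c) :
    ∀ y, (hy : y < n) → ∃ ms : List (Fin c), ms.length = y ∧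
      GoodB (⟨0, hn⟩, ⟨0, hn⟩) B (playMoves (⟨0, hn⟩, ⟨0, hn⟩) B ms) ∧
      ∀ x (hx : x < n), x ≤ y →
        SameColorConn (playMoves (⟨0, hn⟩, ⟨0, hn⟩) B ms) (⟨0, hn⟩, ⟨0, hn⟩)
          (⟨0, hn⟩, ⟨x, hx⟩) := by
  set o : Tile n := (⟨0, hn⟩, ⟨0, hn⟩) with ho
  intro y
  induction y with
  | zero =>
      intro _
      refine ⟨[], rfl, fun q => Or.inr rfl, ?_⟩
      intro x hx hx0
      have : x = 0 := Nat.le_zero.mp hx0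
      subst this
      exact .refl
  | succ y ih =>
      intro hy
      obtain ⟨ms, hlen, hg, hconn⟩ := ih (Nat.lt_of_succ_lt hy)
      set q : Tile n := (⟨0, hn⟩, ⟨y + 1, hy⟩) with hq
      refine ⟨ms ++ [B q], by simp [hlen], ?_, ?_⟩
      · rw [playMoves_append]
        exact good_play o _ hg
      · intro x hx hxle
        rw [playMoves_append]
        rcases Nat.lt_or_ge x (y + 1) with hlt | hge
        · exact conn_play o _ (hconn x hx (Nat.lt_succ_iff.mp hlt))
        · have hxe : x = y + 1 := le_antisymm hxle hge
          subst hxe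
          have hadj : adjT (⟨0, hn⟩, ⟨y, Nat.lt_of_succ_lt hy⟩) q := by
            simp only [adjT, hq]
            push_cast
            simp
          exact absorbList o [B q] _ hg _ _ hadj
            (hconn y (Nat.lt_of_succ_lt hy) le_rfl) (Or.inl (by simp [hq]))

/-- Flood rows 0..i. -/
lemma rows (hn : 1 ≤ n) (hc : 2 ≤ c) (B : Board n c) :
    ∀ i, i < n → ∃ ms : List (Fin c), ms.length = (n - 1) + i * (c - 1) ∧
      GoodB (⟨0, hn⟩, ⟨0, hn⟩) B (playMoves (⟨0, hn⟩, ⟨0, hn⟩) B ms) ∧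
      ∀ x y (hx : x < n) (hy : y < n), x ≤ i →
        SameColorConn (playMoves (⟨0, hn⟩, ⟨0, hn⟩) B ms) (⟨0, hn⟩, ⟨0, hn⟩)
          (⟨x, hx⟩, ⟨y, hy⟩) := by
  set o : Tile n := (⟨0, hn⟩, ⟨0, hn⟩) with ho
  intro i
  induction i with
  | zero =>
      intro _
      obtain ⟨ms, hlen, hg, hconn⟩ := row0 hn B (n - 1) (by omega)
      refine ⟨ms, by omega, hg, ?_⟩
      intro x y hx hy hxle
      have : x = 0 := Nat.le_zero.mp hxle
      subst this
      exact hconn y hy (by omega)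
  | succ i ih =>
      intro hi
      obtain ⟨ms, hlen, hg, hconn⟩ := ih (Nat.lt_of_succ_lt hi)
      set C := playMoves o B ms with hC
      set k0 : Fin c := C o with hk0
      set L : List (Fin c) := (List.finRange c).erase k0 with hL
      have hLlen : L.length = c - 1 := by
        rw [hL, List.length_erase_of_mem (List.mem_finRange k0), List.length_finRange]
      refine ⟨ms ++ L, by simp [hlen, hLlen, Nat.succ_mul]; omega, ?_, ?_⟩
      · rw [playMoves_append]
        exact good_play o _ hg
      · intro x y hx hy hxle
        rw [playMoves_append]
        rcases Nat.lt_or_ge x (i + 1) with hlt | hge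
        · exact conn_play o _ (hconn x y hx hy (Nat.lt_succ_iff.mp hlt))
        · have hxe : x = i + 1 := le_antisymm hxle hge
          subst hxe
          set q : Tile n := (⟨i + 1, hx⟩, ⟨y, hy⟩) with hq
          set p : Tile n := (⟨i, Nat.lt_of_succ_lt hi⟩, ⟨y, hy⟩) with hp
          have hadj : adjT p q := by
            simp only [adjT, hp, hq]
            push_cast
            simp
          have hpc : SameColorConn C o p := hconn i y _ hy le_rfl
          refine absorbList o L C hg p q hadj hpc ?_
          rcases hg q with hcq | hcq
          · exact Or.inr hcq
          · by_cases hbq : B q = k0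
            · refine Or.inr (hpc.tail ⟨hadj, ?_⟩)
              rw [connColor o hpc, hcq, hbq]
            · exact Or.inl ((List.mem_erase_of_ne (by rw [← hcq] at hbq; rw [← hcq]; exact hbq)).mpr
                (List.mem_finRange _))

end Strategy

/-- any n×n board with c ≥ 2 colours can be flooded in at most
c(n-1) moves; in particular the max of m(B) over such boards is at most c(n-1). -/
theorem stmt9 (n c : ℕ) (hn : 1 ≤ n) (hc : 2 ≤ c) (B : Board n c) :
    floodMoves B (⟨0, hn⟩, ⟨0, hn⟩) ≤ c * (n - 1) := by
  set o : Tile n := (⟨0, hn⟩, ⟨0, hn⟩) with ho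
  obtain ⟨ms, hlen, _, hconn⟩ := rows hn hc B (n - 1) (by omega)
  have hfl : Flooded (playMoves o B ms) := by
    intro p q
    have h1 : SameColorConn (playMoves o B ms) o p := by
      have := hconn p.1 p.2 p.1.2 p.2.2 (by omega)
      simpa using this
    have h2 : SameColorConn (playMoves o B ms) o q := by
      have := hconn q.1 q.2 q.1.2 q.2.2 (by omega)
      simpa using this
    rw [connColor o h1, connColor o h2]
  have hmem : ms.length ∈ {l : ℕ | ∃ ms : List (Fin c), ms.length = l ∧
      Flooded (playMoves o B ms)} := ⟨ms, rfl, hfl⟩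
  calc floodMoves B o ≤ ms.length := Nat.sInf_le hmem
    _ = (n - 1) + (n - 1) * (c - 1) := hlen
    _ ≤ c * (n - 1) := by
        have h1 : (n - 1) + (n - 1) * (c - 1) = (n - 1) * c := by
          have : c - 1 + 1 = c := by omega
          calc (n - 1) + (n - 1) * (c - 1) = (n - 1) * ((c - 1) + 1) := by ring
            _ = (n - 1) * c := by rw [this]
        rw [h1, Nat.mul_comm]
end

section
/- An alternating r-diamond forces r alternations: if a board contains an r-diamond whose layer i (tiles at board distance i-1 from the centre) is coloured x for odd i and y for even i, with x ≠ y and x,y appearing nowhere else on the board, then any sequence of Flood-It moves that floods the board must contain at least r moves whose colours are x or y, alternating appropriately; more precisely it contains the alternating string of the diamond's layer colours (read outside-in) as a subsequence. -/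
/-- Grid (taxicab) distance between two tiles. -/
def gdist {n : ℕ} (p q : Tile n) : ℕ :=
  ((p.1 : ℤ) - (q.1 : ℤ)).natAbs + ((p.2 : ℤ) - (q.2 : ℤ)).natAbs

-- aux lemmas
lemma adjT_symm' {n} {p q : Tile n} (h : adjT p q) : adjT q p := by
  unfold adjT at *; omega

lemma gdist_adj' {n} (t : Tile n) {p q : Tile n} (h : adjT p q) :
    gdist t p ≤ gdist t q + 1 := by
  unfold adjT gdist at *; omega

lemma conn_color' {n c} {B : Board n c} {o p : Tile n} (h : SameColorConn B o p) : B o = B p := by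
  induction h with
  | refl => rfl
  | tail _ h2 ih => exact ih.trans h2.2

lemma conn_mono' {n c} {B : Board n c} (o : Tile n) (k : Fin c) {p : Tile n}
    (h : SameColorConn B o p) : SameColorConn (flood B o k) o p := by
  induction h with
  | refl => exact .refl
  | @tail b q h1 h2 ih =>
      refine ih.tail ⟨h2.1, ?_⟩
      have hb : SameColorConn B o b := h1
      have hq : SameColorConn B o q := h1.tail h2
      simp [flood, hb, hq]

lemma flood_notin' {n c} {B : Board n c} {o : Tile n} {k : Fin c} {p : Tile n}
    (h : ¬ SameColorConn B o p) : flood B o k p = B p := by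
  simp [flood, h]

lemma play_notin' {n c} (o : Tile n) (ms : List (Fin c)) :
    ∀ (B : Board n c) (p : Tile n), ¬ SameColorConn (playMoves o B ms) o p →
      playMoves o B ms p = B p ∧ ¬ SameColorConn B o p := by
  induction ms with
  | nil => intro B p h; exact ⟨rfl, h⟩
  | cons k ks ih =>
      intro B p h
      simp only [playMoves] at h ⊢
      obtain ⟨h1, h2⟩ := ih (flood B o k) p h
      have h3 : ¬ SameColorConn B o p := fun hc => h2 (conn_mono' o k hc)
      exact ⟨h1.trans (flood_notin' h3), h3⟩

lemma play_concat' {n c} (o : Tile n) (ms : List (Fin c)) :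
    ∀ (B : Board n c) (k : Fin c), playMoves o B (ms ++ [k]) = flood (playMoves o B ms) o k := by
  induction ms with
  | nil => intro B k; rfl
  | cons a as ih => intro B k; simp only [List.cons_append, playMoves]; exact ih _ _

lemma conn_ivt' {n c} {B : Board n c} (t : Tile n) {o p : Tile n} (h : SameColorConn B o p) :
    ∀ v : ℕ, gdist t p ≤ v → v ≤ gdist t o →
      ∃ q, SameColorConn B o q ∧ gdist t q = v := by
  induction h with
  | refl => intro v h1 h2; exact ⟨o, .refl, by omega⟩
  | @tail b q hb hstep ih =>
      intro v h1 h2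
      by_cases hv : gdist t q = v
      · exact ⟨q, hb.tail hstep, hv⟩
      · have hle : gdist t b ≤ gdist t q + 1 := gdist_adj' t hstep.1
        exact ih v (by omega) h2

lemma grid_conn' {n c} (hn : 1 ≤ n) (B : Board n c) (hB : Flooded B) (p : Tile n) :
    SameColorConn B (⟨0, hn⟩, ⟨0, hn⟩) p := by
  obtain ⟨⟨a, ha⟩, ⟨b, hb⟩⟩ := p
  suffices H : ∀ m (a b : ℕ) (ha : a < n) (hb : b < n), a + b = m →
      SameColorConn B (⟨0, hn⟩, ⟨0, hn⟩) (⟨a, ha⟩, ⟨b, hb⟩) from H (a+b) a b ha hb rfl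
  intro m
  induction m with
  | zero =>
      intro a b ha hb h
      have ha0 : a = 0 := by omega
      have hb0 : b = 0 := by omega
      subst ha0; subst hb0
      exact .refl
  | succ m ih =>
      intro a b ha hb h
      rcases Nat.eq_zero_or_pos a with ha0 | hpos
      · subst ha0
        have hbpos : 0 < b := by omega
        have prev := ih 0 (b-1) ha (by omega) (by omega)
        refine prev.tail ⟨?_, hB _ _⟩
        unfold adjT
        simp only [Fin.val_mk]
        omega
      · have prev := ih (a-1) b (by omega) hb (by omega)
        refine prev.tail ⟨?_, hB _ _⟩
        unfold adjT
        simp only [Fin.val_mk]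
        omega

lemma ofFn_step' {c} (f : ℕ → Fin c) (m : ℕ) :
    (List.ofFn fun j : Fin (m+1) => f j) =
      (List.ofFn fun j : Fin m => f j) ++ [f m] := by
  rw [List.ofFn_succ']
  simp [List.concat_eq_append]

lemma main' {n c : ℕ} (hn : 1 ≤ n) (B : Board n c) (t : Tile n) (r : ℕ)
    (x y : Fin c) (hxy : x ≠ y)
    (hdiamond : ∀ p : Tile n, gdist t p < r →
      B p = if gdist t p % 2 = 0 then x else y)
    (houtside : ∀ p : Tile n, r ≤ gdist t p → B p ≠ x ∧ B p ≠ y)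
    (horigin : r ≤ gdist t (⟨0, hn⟩, ⟨0, hn⟩)) :
    ∀ (ms : List (Fin c)), ∀ p : Tile n, gdist t p < r →
      SameColorConn (playMoves (⟨0, hn⟩, ⟨0, hn⟩) B ms) (⟨0, hn⟩, ⟨0, hn⟩) p →
      (List.ofFn fun j : Fin (r - gdist t p) => if (r - (j : ℕ)) % 2 = 1 then x else y).Sublist ms := by
  intro ms
  induction ms using List.reverseRecOn with
  | nil =>
      intro p hp hconn
      exfalso
      have h1 := conn_color' hconn
      simp only [playMoves] at h1
      have h2 := houtside _ horigin
      have h3 := hdiamond p hp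
      rw [h1, h3] at h2
      split at h2 <;> simp at h2
  | append_singleton ms k ih =>
      intro p hp hconn
      rw [play_concat'] at hconn
      set o : Tile n := (⟨0, hn⟩, ⟨0, hn⟩) with ho
      set B1 := playMoves o B ms with hB1
      by_cases hcase : SameColorConn B1 o p
      · exact (ih p hp hcase).trans (List.sublist_append_left ms [k])
      · obtain ⟨hBp, _⟩ := play_notin' o ms B p hcase
        rw [← hB1] at hBp
        have hko : flood B1 o k o = k := by
          unfold flood; rw [if_pos]; exact Relation.ReflTransGen.refl
        have hkp : flood B1 o k p = k := by rw [← conn_color' hconn, hko]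
        have hBpk : B p = k := by
          rw [← hBp, ← flood_notin' (k := k) hcase]; exact hkp
        set d := gdist t p with hd
        have hcold : B p = if d % 2 = 0 then x else y := hdiamond p hp
        -- tail part
        have htail : (List.ofFn fun j : Fin (r - (d+1)) =>
            if (r - (j : ℕ)) % 2 = 1 then x else y).Sublist ms := by
          by_cases hd1 : d + 1 < r
          · obtain ⟨q, hq, hqd⟩ := conn_ivt' t hconn (d+1) (by omega) (by omega)
            have hq1 : SameColorConn B1 o q := by
              by_contra hq1
              obtain ⟨hBq, _⟩ := play_notin' o ms B q hq1
              rw [← hB1] at hBq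
              have hkq : flood B1 o k q = k := by rw [← conn_color' hq, hko]
              have : B q = k := by
                rw [← hBq, ← flood_notin' (k := k) hq1]; exact hkq
              have hcolq : B q = if (d+1) % 2 = 0 then x else y := by
                rw [hdiamond q (by omega), hqd]
              rw [this, ← hBpk, hcold] at hcolq
              rcases Nat.eq_zero_or_pos (d % 2) with h2 | h2
              · rw [if_pos h2, if_neg (by omega)] at hcolq
                exact hxy hcolq
              · rw [if_neg (by omega), if_pos (by omega)] at hcolq
                exact hxy hcolq.symm
            have := ih q (by omega) hq1
            rwa [hqd] at this
          · have hz : r - (d+1) = 0 := by omega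
            have : (List.ofFn fun j : Fin (r - (d+1)) =>
                if (r - (j : ℕ)) % 2 = 1 then x else y) = [] := by
              apply List.eq_nil_of_length_eq_zero
              simp [hz]
            rw [this]
            exact List.nil_sublist ms
        have hstep : r - d = (r - (d+1)) + 1 := by omega
        rw [hstep, ofFn_step' (fun m => if (r - m) % 2 = 1 then x else y) (r - (d+1))]
        refine List.Sublist.append htail ?_
        have hlast : (if (r - (r - (d+1))) % 2 = 1 then x else y) = k := by
          rw [← hBpk, hcold]
          have : r - (r - (d+1)) = d + 1 := by omega
          rw [this]
          rcases Nat.eq_zero_or_pos (d % 2) with h2 | h2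
          · rw [if_pos (by omega), if_pos h2]
          · rw [if_neg (by omega), if_neg (by omega)]
        rw [hlast]

/-- if the board contains an alternating r-diamond centred at `t`
(layer i, the tiles at distance i-1 from `t`, has colour x for odd i and y for
even i, x ≠ y, and x,y appear nowhere else on the board), and the top-left tile
is outside the diamond, then any move sequence flooding the board contains as a
subsequence the alternating string of the diamond's layer colours read
outside-in (in particular at least r moves of colours x or y). -/
theorem stmt13 (n c : ℕ) (hn : 1 ≤ n) (B : Board n c) (t : Tile n) (r : ℕ) (hr : 1 ≤ r)
    (x y : Fin c) (hxy : x ≠ y)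
    (hdiamond : ∀ p : Tile n, gdist t p < r →
      B p = if gdist t p % 2 = 0 then x else y)
    (houtside : ∀ p : Tile n, r ≤ gdist t p → B p ≠ x ∧ B p ≠ y)
    (horigin : r ≤ gdist t (⟨0, hn⟩, ⟨0, hn⟩))
    (ms : List (Fin c)) (hms : Flooded (playMoves (⟨0, hn⟩, ⟨0, hn⟩) B ms)) :
    (List.ofFn fun j : Fin r => if (r - (j : ℕ)) % 2 = 1 then x else y).Sublist ms := by
  have hconn : SameColorConn (playMoves (⟨0, hn⟩, ⟨0, hn⟩) B ms) (⟨0, hn⟩, ⟨0, hn⟩) t :=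
    grid_conn' hn _ hms t
  have h0 : gdist t t = 0 := by unfold gdist; omega
  have h := main' hn B t r x y hxy hdiamond houtside horigin ms t (by omega) hconn
  rw [h0] at h
  exact h
end
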